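/- Let f : ℝ^{n₀} → ℝ^{n₂} be a one-hidden-layer network f(x) = W² σ(W¹ x + b¹) + b², where W¹ ∈ ℝ^{n₁×n₀}, b¹ ∈ ℝ^{n₁}, W² ∈ ℝ^{n₂×n₁}, b² ∈ ℝ^{n₂}, and σ : ℝ^{n₁} → ℝ^{n₁} acts coordinatewise. Let S ⊆ ℝ^{n₀} and l, u ∈ ℝ^{n₁} be such that l ≤ W¹x + b¹ ≤ u componentwise for all x ∈ S, and suppose a^U, c^U, a^L, c^L ∈ ℝ^{n₁} satisfy a^L_j·t + c^L_j ≤ σ_j(t) ≤ a^U_j·t + c^U_j for every j and every t ∈ [l_j, u_j]. Define Ψ ∈ ℝ^{n₂×n₀} by Ψ_{i,:} = ∑_j (W²_{ij}⁺ a^U_j + W²_{ij}⁻ a^L_j)·W¹_{j,:} and α ∈ ℝ^{n₂} by α_i = ∑_j (W²_{ij}⁺ (a^U_j b¹_j + c^U_j) + W²_{ij}⁻ (a^L_j b¹_j + c^L_j)) + b²_i; define Φ and β analogously with the roles of (a^U, c^U) and (a^L, c^L) exchanged. Then for every x ∈ S and every i: Φ_{i,:} x + β_i ≤ f_i(x)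 ≤ Ψ_{i,:} x + α_i. -/

import Mathlib

/-- Convex relaxation of a one-hidden-layer network: affine output bounds
`Φx + β ≤ f(x) ≤ Ψx + α` valid on the input set `S`, constructed from the
weights, biases, and linear relaxations of the activations. -/
theorem one_hidden_layer_affine_bounds
    {n₀ n₁ n₂ : ℕ}
    (W1 : Matrix (Fin n₁) (Fin n₀) ℝ) (b1 : Fin n₁ → ℝ)
    (W2 : Matrix (Fin n₂) (Fin n₁) ℝ) (b2 : Fin n₂ → ℝ)
    (σ : Fin n₁ → ℝ → ℝ)
    (f : (Fin n₀ → ℝ) → Fin n₂ → ℝ)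
    (hf : ∀ x i, f x i = (∑ j, W2 i j * σ j ((∑ k, W1 j k * x k) + b1 j)) + b2 i)
    (S : Set (Fin n₀ → ℝ)) (l u : Fin n₁ → ℝ)
    (hpre : ∀ x ∈ S, ∀ j, l j ≤ (∑ k, W1 j k * x k) + b1 j ∧
      (∑ k, W1 j k * x k) + b1 j ≤ u j)
    (aU cU aL cL : Fin n₁ → ℝ)
    (hσ : ∀ j, ∀ t : ℝ, l j ≤ t → t ≤ u j →
      aL j * t + cL j ≤ σ j t ∧ σ j t ≤ aU j * t + cU j)
    (Ψ Φ : Matrix (Fin n₂) (Fin n₀) ℝ) (α β : Fin n₂ → ℝ)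
    (hΨ : ∀ i k, Ψ i k = ∑ j, (max (W2 i j) 0 * aU j + min (W2 i j) 0 * aL j) * W1 j k)
    (hα : ∀ i, α i = (∑ j, (max (W2 i j) 0 * (aU j * b1 j + cU j)
        + min (W2 i j) 0 * (aL j * b1 j + cL j))) + b2 i)
    (hΦ : ∀ i k, Φ i k = ∑ j, (max (W2 i j) 0 * aL j + min (W2 i j) 0 * aU j) * W1 j k)
    (hβ : ∀ i, β i = (∑ j, (max (W2 i j) 0 * (aL j * b1 j + cL j)
        + min (W2 i j) 0 * (aU j * b1 j + cU j))) + b2 i) :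
    ∀ x ∈ S, ∀ i : Fin n₂,
      (∑ k, Φ i k * x k) + β i ≤ f x i ∧ f x i ≤ (∑ k, Ψ i k * x k) + α i := by
  intro x hx i
  set z : Fin n₁ → ℝ := fun j => (∑ k, W1 j k * x k) + b1 j with hz
  have hzb : ∀ j, l j ≤ z j ∧ z j ≤ u j := fun j => hpre x hx j
  have hσz : ∀ j, aL j * z j + cL j ≤ σ j (z j) ∧ σ j (z j) ≤ aU j * z j + cU j :=
    fun j => hσ j (z j) (hzb j).1 (hzb j).2
  have hp : ∀ j, 0 ≤ max (W2 i j) 0 := fun j => le_max_right _ _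
  have hm : ∀ j, min (W2 i j) 0 ≤ 0 := fun j => min_le_right _ _
  have hsum : ∀ (c : Fin n₁ → ℝ),
      (∑ k, (∑ j, c j * W1 j k) * x k) = ∑ j, c j * (∑ k, W1 j k * x k) := by
    intro c
    simp only [Finset.sum_mul, Finset.mul_sum]
    rw [Finset.sum_comm]
    exact Finset.sum_congr rfl fun j _ => Finset.sum_congr rfl fun k _ => by ring
  have hfx : f x i = (∑ j, W2 i j * σ j (z j)) + b2 i := hf x i
  have hcomb : ∀ j, max (W2 i j) 0 + min (W2 i j) 0 = W2 i j := by
    intro j; rw [max_add_min, add_zero]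
  constructor
  · have key : (∑ k, Φ i k * x k) + β i
        = (∑ j, (max (W2 i j) 0 * (aL j * z j + cL j)
            + min (W2 i j) 0 * (aU j * z j + cU j))) + b2 i := by
      simp only [hΦ, hβ i, hsum, ← add_assoc, ← Finset.sum_add_distrib]
      congr 1
      refine Finset.sum_congr rfl fun j _ => ?_
      simp only [hz]
      ring
    rw [key, hfx]
    refine add_le_add_left (Finset.sum_le_sum fun j _ => ?_) _
    calc max (W2 i j) 0 * (aL j * z j + cL j) + min (W2 i j) 0 * (aU j * z j + cU j)
        ≤ max (W2 i j) 0 * σ j (z j) + min (W2 i j) 0 * σ j (z j) :=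
          add_le_add (mul_le_mul_of_nonneg_left (hσz j).1 (hp j))
            (mul_le_mul_of_nonpos_left (hσz j).2 (hm j))
      _ = W2 i j * σ j (z j) := by rw [← add_mul, hcomb]
  · have key : (∑ k, Ψ i k * x k) + α i
        = (∑ j, (max (W2 i j) 0 * (aU j * z j + cU j)
            + min (W2 i j) 0 * (aL j * z j + cL j))) + b2 i := by
      simp only [hΨ, hα i, hsum, ← add_assoc, ← Finset.sum_add_distrib]
      congr 1
      refine Finset.sum_congr rfl fun j _ => ?_
      simp only [hz]
      ring
    rw [key, hfx]
    refine add_le_add_left (Finset.sum_le_sum fun j _ => ?_) _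
    calc W2 i j * σ j (z j)
        = max (W2 i j) 0 * σ j (z j) + min (W2 i j) 0 * σ j (z j) := by
          rw [← add_mul, hcomb]
      _ ≤ max (W2 i j) 0 * (aU j * z j + cU j) + min (W2 i j) 0 * (aL j * z j + cL j) :=
          add_le_add (mul_le_mul_of_nonneg_left (hσz j).2 (hp j))
            (mul_le_mul_of_nonpos_left (hσz j).1 (hm j))
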